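/- Fix i ≠ j in {1,…,N} and a non-negative integer n. The linear operator f ↦ (z_i z_j/(z_i - z_j)) · (f - K_{ij} f), where K_{ij} swaps variables z_i and z_j, maps the rectangular module R_n (polynomials of degree at most n in each individual variable) into itself. -/

import Mathlib

open MvPolynomial

private lemma aux_dvd_pow' {R : Type*} [CommRing R] (x y : R) {p q : ℕ} (h : q ≤ p) :
    (x - y) ∣ x ^ p * y ^ q - x ^ q * y ^ p := by
  obtain ⟨d, rfl⟩ := Nat.exists_eq_add_of_le h
  obtain ⟨c, hc⟩ := sub_dvd_pow_sub_pow x y d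
  exact ⟨x ^ q * y ^ q * c, by linear_combination (x ^ q * y ^ q) * hc⟩

private lemma aux_dvd_pow {R : Type*} [CommRing R] (x y : R) (p q : ℕ) :
    (x - y) ∣ x ^ p * y ^ q - x ^ q * y ^ p := by
  rcases le_total q p with h | h
  · exact aux_dvd_pow' x y h
  · have h2 := dvd_neg.mpr (aux_dvd_pow' x y h)
    rwa [neg_sub] at h2

private lemma key_dvd {R : Type*} [CommRing R] {σ : Type*} [DecidableEq σ] (i j : σ) (hij : i ≠ j)
    (f : MvPolynomial σ R) :
    (X i - X j : MvPolynomial σ R) ∣ f - rename (Equiv.swap i j) f := by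
  induction f using MvPolynomial.induction_on' with
  | add p q hp hq =>
    have h : (p + q) - rename (Equiv.swap i j) (p + q)
        = (p - rename (Equiv.swap i j) p) + (q - rename (Equiv.swap i j) q) := by
      rw [map_add]; ring
    rw [h]; exact dvd_add hp hq
  | monomial u a =>
    rw [rename_monomial]
    set w : σ →₀ ℕ := (u.erase i).erase j with hw
    have happ : ∀ k, (Finsupp.mapDomain (⇑(Equiv.swap i j)) u) k = u (Equiv.swap i j k) := by
      intro k
      conv_lhs => rw [show k = Equiv.swap i j (Equiv.swap i j k) by simp]
      exact Finsupp.mapDomain_apply (Equiv.swap i j).injective u _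
    have hu : u = w + Finsupp.single i (u i) + Finsupp.single j (u j) := by
      ext k
      rcases eq_or_ne k i with rfl | hki
      · rcases eq_or_ne k j with rfl | hkj
        · exact absurd rfl hij
        · simp [hw, Finsupp.single_apply, hkj, Ne.symm hkj]
      · rcases eq_or_ne k j with rfl | hkj
        · simp [hw, Finsupp.single_apply, hki, Ne.symm hki]
        · simp [hw, Finsupp.single_apply, hki, hkj, Ne.symm hki, Ne.symm hkj]
    have hu' : Finsupp.mapDomain (⇑(Equiv.swap i j)) u
        = w + Finsupp.single i (u j) + Finsupp.single j (u i) := by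
      ext k
      rw [happ k]
      rcases eq_or_ne k i with rfl | hki
      · rcases eq_or_ne k j with rfl | hkj
        · exact absurd rfl hij
        · simp [hw, Equiv.swap_apply_left, Finsupp.single_apply, hkj, Ne.symm hkj]
      · rcases eq_or_ne k j with rfl | hkj
        · simp [hw, Equiv.swap_apply_right, Finsupp.single_apply, hki, Ne.symm hki]
        · simp [hw, Equiv.swap_apply_of_ne_of_ne hki hkj, Finsupp.single_apply,
            hki, hkj, Ne.symm hki, Ne.symm hkj]
    have e : ∀ p q : ℕ,
        (monomial (w + Finsupp.single i p + Finsupp.single j q) a : MvPolynomial σ R)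
          = monomial w a * X i ^ p * X j ^ q := by
      intro p q
      rw [X_pow_eq_monomial, X_pow_eq_monomial, monomial_mul, monomial_mul, mul_one, mul_one]
    have h1 := e (u i) (u j)
    rw [← hu] at h1
    have h2 := e (u j) (u i)
    rw [← hu'] at h2
    rw [h1, h2]
    obtain ⟨c, hc⟩ := aux_dvd_pow (X i : MvPolynomial σ R) (X j) (u i) (u j)
    exact ⟨monomial w a * c, by linear_combination (monomial w a : MvPolynomial σ R) * hc⟩

private lemma degreeOf_mul_eq_field {F : Type*} [Field F] {N : ℕ} (k : Fin (N + 1))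
    (p q : MvPolynomial (Fin (N + 1)) F) (hp : p ≠ 0) (hq : q ≠ 0) :
    degreeOf k (p * q) = degreeOf k p + degreeOf k q := by
  set e := Equiv.swap k (0 : Fin (N + 1)) with he
  have hre : ∀ r : MvPolynomial (Fin (N + 1)) F,
      degreeOf k r = degreeOf 0 (rename (⇑e) r) := by
    intro r
    have h := degreeOf_rename_of_injective (p := r) e.injective k
    rw [he] at h ⊢
    simpa [Equiv.swap_apply_left] using h.symm
  have hrp : rename (⇑e) p ≠ 0 := fun h => hp ((map_eq_zero_iff _ (rename_injective _ e.injective)).mp h)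
  have hrq : rename (⇑e) q ≠ 0 := fun h => hq ((map_eq_zero_iff _ (rename_injective _ e.injective)).mp h)
  rw [hre, hre, hre, map_mul, ← natDegree_finSuccEquiv, ← natDegree_finSuccEquiv,
    ← natDegree_finSuccEquiv, map_mul]
  exact Polynomial.natDegree_mul
    (fun h => hrp ((map_eq_zero_iff _ (finSuccEquiv F N).injective).mp h))
    (fun h => hrq ((map_eq_zero_iff _ (finSuccEquiv F N).injective).mp h))

theorem Qplus_preserves_rectangular {F : Type*} [Field F] {N : ℕ}
    (i j : Fin N) (hij : i ≠ j) (n : ℕ) (f : MvPolynomial (Fin N) F)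
    (hf : ∀ k, f.degreeOf k ≤ n) :
    ∃ q : MvPolynomial (Fin N) F,
      f - rename (Equiv.swap i j) f = (X i - X j) * q ∧
        ∀ k, (X i * X j * q).degreeOf k ≤ n := by
  obtain _ | M := N
  · exact i.elim0
  obtain ⟨q, hq⟩ := key_dvd i j hij f
  refine ⟨q, hq, fun k => ?_⟩
  by_cases hq0 : q = 0
  · simp [hq0]
  have hXne : (X i - X j : MvPolynomial (Fin (M + 1)) F) ≠ 0 := by
    intro h
    have h1 := congrArg (coeff (Finsupp.single i 1)) h
    simp [coeff_X', Finsupp.single_eq_single_iff, hij, Ne.symm hij] at h1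
  have hsub : degreeOf k (f - rename (Equiv.swap i j) f) ≤ n := by
    refine (degreeOf_sub_le k _ _).trans (max_le (hf k) ?_)
    have h2 : degreeOf k (rename (Equiv.swap i j) f) = degreeOf (Equiv.swap i j k) f := by
      conv_lhs => rw [show k = Equiv.swap i j (Equiv.swap i j k) by simp]
      exact degreeOf_rename_of_injective (Equiv.swap i j).injective _
    rw [h2]; exact hf _
  have hXle : degreeOf k (X i : MvPolynomial (Fin (M + 1)) F) + degreeOf k (X j : MvPolynomial (Fin (M + 1)) F)
      ≤ degreeOf k (X i - X j : MvPolynomial (Fin (M + 1)) F) := by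
    rcases eq_or_ne k i with rfl | hki
    · have hm : (Finsupp.single k 1 : Fin (M + 1) →₀ ℕ)
          ∈ (X k - X j : MvPolynomial (Fin (M + 1)) F).support := by
        rw [mem_support_iff]
        simp [coeff_X', Finsupp.single_eq_single_iff, hij, Ne.symm hij]
      have h3 := monomial_le_degreeOf k hm
      simp only [Finsupp.single_eq_same] at h3
      simpa [degreeOf_X, hij] using h3
    rcases eq_or_ne k j with rfl | hkj
    · have hm : (Finsupp.single k 1 : Fin (M + 1) →₀ ℕ)
          ∈ (X i - X k : MvPolynomial (Fin (M + 1)) F).support := by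
        rw [mem_support_iff]
        simp [coeff_X', Finsupp.single_eq_single_iff, hij, Ne.symm hij]
      have h3 := monomial_le_degreeOf k hm
      simp only [Finsupp.single_eq_same] at h3
      simpa [degreeOf_X, Ne.symm hij] using h3
    · simp [degreeOf_X, hki, hkj]
  calc degreeOf k (X i * X j * q)
      ≤ degreeOf k (X i * X j : MvPolynomial (Fin (M + 1)) F) + degreeOf k q :=
        degreeOf_mul_le _ _ _
    _ ≤ (degreeOf k (X i : MvPolynomial (Fin (M + 1)) F) + degreeOf k (X j)) + degreeOf k q :=
        add_le_add_left (degreeOf_mul_le _ _ _) _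
    _ ≤ degreeOf k (X i - X j : MvPolynomial (Fin (M + 1)) F) + degreeOf k q :=
        add_le_add_left hXle _
    _ = degreeOf k ((X i - X j) * q) := (degreeOf_mul_eq_field k _ q hXne hq0).symm
    _ = degreeOf k (f - rename (Equiv.swap i j) f) := by rw [hq]
    _ ≤ n := hsub
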